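/- arXiv:1501.02474 — 7 statements merged into one kernel-verified Lean document; each statement's English description precedes it below -/
import Mathlib

section
/- For all integers s, t ≥ 1, r(s, t) ≤ C(s + t - 2, s - 1), where C denotes the binomial coefficient. -/
def hasMonoClique {N : ℕ} (c : Sym2 (Fin N) → Bool) (col : Bool) (k : ℕ) : Prop :=
  ∃ S : Finset (Fin N), S.card = k ∧ ∀ i ∈ S, ∀ j ∈ S, i ≠ j → c s(i, j) = col

def ramseyProp (N s t : ℕ) : Prop :=
  ∀ c : Sym2 (Fin N) → Bool, hasMonoClique c true s ∨ hasMonoClique c false t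

noncomputable def ramsey (s t : ℕ) : ℕ := sInf {N | ramseyProp N s t}

lemma mono_in_subset {M N s t : ℕ} (h : ramseyProp M s t)
    (c : Sym2 (Fin N) → Bool) (A : Finset (Fin N)) (hA : M ≤ A.card) :
    (∃ S : Finset (Fin N), S ⊆ A ∧ S.card = s ∧ ∀ i ∈ S, ∀ j ∈ S, i ≠ j → c s(i, j) = true) ∨
    (∃ S : Finset (Fin N), S ⊆ A ∧ S.card = t ∧ ∀ i ∈ S, ∀ j ∈ S, i ≠ j → c s(i, j) = false) := by
  obtain ⟨A', hA'sub, hA'card⟩ := Finset.exists_subset_card_eq hA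
  have e := A'.orderIsoOfFin hA'card
  set f : Fin M → Fin N := fun i => (e i : Fin N) with hf
  have hfinj : Function.Injective f := fun a b hab => e.injective (Subtype.ext hab)
  have hfmem : ∀ i, f i ∈ A := fun i => hA'sub (e i).2
  have key : ∀ col k, hasMonoClique (fun p => c (Sym2.map f p)) col k →
      ∃ S : Finset (Fin N), S ⊆ A ∧ S.card = k ∧
        ∀ i ∈ S, ∀ j ∈ S, i ≠ j → c s(i, j) = col := by
    rintro col k ⟨S₀, hcard, hmono⟩
    refine ⟨S₀.image f, ?_, ?_, ?_⟩
    · intro x hx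
      obtain ⟨a, _, rfl⟩ := Finset.mem_image.mp hx
      exact hfmem a
    · rw [Finset.card_image_of_injective _ hfinj, hcard]
    · intro i hi j hj hij
      obtain ⟨a, ha, rfl⟩ := Finset.mem_image.mp hi
      obtain ⟨b, hb, rfl⟩ := Finset.mem_image.mp hj
      have hab : a ≠ b := fun h' => hij (by rw [h'])
      have := hmono a ha b hb hab
      simpa [Sym2.map_pair_eq] using this
  rcases h (fun p => c (Sym2.map f p)) with h1 | h1
  · exact Or.inl (key true s h1)
  · exact Or.inr (key false t h1)

lemma ramseyProp_one_left (t : ℕ) : ramseyProp 1 1 t := by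
  intro c
  left
  refine ⟨{0}, by simp, ?_⟩
  intro i hi j hj hij
  simp only [Finset.mem_singleton] at hi hj
  exact absurd (hi.trans hj.symm) hij

lemma ramseyProp_one_right (s : ℕ) : ramseyProp 1 s 1 := by
  intro c
  right
  refine ⟨{0}, by simp, ?_⟩
  intro i hi j hj hij
  simp only [Finset.mem_singleton] at hi hj
  exact absurd (hi.trans hj.symm) hij

lemma ramseyProp_step {M M' s t : ℕ} (hM : 1 ≤ M)
    (h1 : ramseyProp M s (t + 1)) (h2 : ramseyProp M' (s + 1) t) :
    ramseyProp (M + M') (s + 1) (t + 1) := by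
  intro c
  have hN : 0 < M + M' := by omega
  set v : Fin (M + M') := ⟨0, hN⟩ with hv
  set R : Finset (Fin (M + M')) :=
    (Finset.univ.erase v).filter (fun i => c s(v, i) = true) with hR
  set B : Finset (Fin (M + M')) :=
    (Finset.univ.erase v).filter (fun i => ¬ (c s(v, i) = true)) with hB
  have hcard : R.card + B.card = M + M' - 1 := by
    rw [hR, hB, Finset.card_filter_add_card_filter_not,
      Finset.card_erase_of_mem (Finset.mem_univ v), Finset.card_univ, Fintype.card_fin]
  have hmemR : ∀ i ∈ R, i ≠ v ∧ c s(v, i) = true := by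
    intro i hi
    rw [hR, Finset.mem_filter, Finset.mem_erase] at hi
    exact ⟨hi.1.1, hi.2⟩
  have hmemB : ∀ i ∈ B, i ≠ v ∧ c s(v, i) = false := by
    intro i hi
    rw [hB, Finset.mem_filter, Finset.mem_erase] at hi
    exact ⟨hi.1.1, by simpa using hi.2⟩
  rcases (show M ≤ R.card ∨ M' ≤ B.card by omega) with hle | hle
  · rcases mono_in_subset h1 c R hle with ⟨S, hSsub, hScard, hSmono⟩ | ⟨S, _, hScard, hSmono⟩
    · left
      have hvS : v ∉ S := fun hmem => (hmemR v (hSsub hmem)).1 rfl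
      refine ⟨insert v S, ?_, ?_⟩
      · rw [Finset.card_insert_of_notMem hvS, hScard]
      · intro i hi j hj hij
        rcases Finset.mem_insert.mp hi with rfl | hi
        · rcases Finset.mem_insert.mp hj with rfl | hj
          · exact absurd rfl hij
          · exact (hmemR j (hSsub hj)).2
        · rcases Finset.mem_insert.mp hj with rfl | hj
          · rw [Sym2.eq_swap]; exact (hmemR i (hSsub hi)).2
          · exact hSmono i hi j hj hij
    · right
      exact ⟨S, hScard, hSmono⟩
  · rcases mono_in_subset h2 c B hle with ⟨S, _, hScard, hSmono⟩ | ⟨S, hSsub, hScard, hSmono⟩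
    · left
      exact ⟨S, hScard, hSmono⟩
    · right
      have hvS : v ∉ S := fun hmem => (hmemB v (hSsub hmem)).1 rfl
      refine ⟨insert v S, ?_, ?_⟩
      · rw [Finset.card_insert_of_notMem hvS, hScard]
      · intro i hi j hj hij
        rcases Finset.mem_insert.mp hi with rfl | hi
        · rcases Finset.mem_insert.mp hj with rfl | hj
          · exact absurd rfl hij
          · exact (hmemB j (hSsub hj)).2
        · rcases Finset.mem_insert.mp hj with rfl | hj
          · rw [Sym2.eq_swap]; exact (hmemB i (hSsub hi)).2
          · exact hSmono i hi j hj hij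

lemma ramseyProp_main : ∀ n s t : ℕ, 1 ≤ s → 1 ≤ t → s + t ≤ n →
    ramseyProp (Nat.choose (s + t - 2) (s - 1)) s t := by
  intro n
  induction n with
  | zero => intro s t hs ht h; omega
  | succ n ih =>
    intro s t hs ht hn
    rcases s with _ | _ | s
    · omega
    · have : 1 + t - 2 = t - 1 := by omega
      rw [this]
      simpa [Nat.choose_zero_right] using ramseyProp_one_left t
    · rcases t with _ | _ | t
      · omega
      · have : s + 2 + 1 - 2 = s + 1 := by omega
        rw [this]
        simpa [Nat.choose_self] using ramseyProp_one_right (s + 2)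
      · have h1 := ih (s + 1) (t + 2) (by omega) (by omega) (by omega)
        have h2 := ih (s + 2) (t + 1) (by omega) (by omega) (by omega)
        rw [show (s + 1) + (t + 2) - 2 = s + t + 1 from by omega,
          show (s + 1) - 1 = s from rfl] at h1
        rw [show (s + 2) + (t + 1) - 2 = s + t + 1 from by omega,
          show (s + 2) - 1 = s + 1 from rfl] at h2
        rw [show (s + 2) + (t + 2) - 2 = s + t + 1 + 1 from by omega,
          show (s + 2) - 1 = s + 1 from rfl, Nat.choose_succ_succ]
        exact ramseyProp_step (Nat.choose_pos (by omega)) h1 h2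

theorem stmt1 (s t : ℕ) (hs : 1 ≤ s) (ht : 1 ≤ t) :
    ramsey s t ≤ Nat.choose (s + t - 2) (s - 1) :=
  Nat.sInf_le (ramseyProp_main (s + t) s t hs ht le_rfl)
end

section
/- If N ≤ (1/e) · t · 2^{(t-1)/2} and t ≥ 3, then 2^{1 - C(t,2)} · C(N, t) < 1; consequently there exists a red/blue edge-colouring of K_N with no monochromatic K_t, i.e., r(t,t) > N. -/
def monoOn (c : ℕ → ℕ → Bool) (col : Bool) (s : ℕ) (V : Finset ℕ) : Prop :=
  ∃ S ⊆ V, S.card = s ∧ ∀ i ∈ S, ∀ j ∈ S, i ≠ j → c i j = col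

lemma monoOn_zero {c col V} : monoOn c col 0 V :=
  ⟨∅, Finset.empty_subset _, Finset.card_empty, by simp⟩

lemma monoOn_mono {c col s V W} (h : V ⊆ W) : monoOn c col s V → monoOn c col s W := by
  rintro ⟨S, hS, h1, h2⟩; exact ⟨S, hS.trans h, h1, h2⟩

lemma keyRamsey (k : ℕ) : ∀ s t, s + t ≤ k →
    ∃ n, ∀ c : ℕ → ℕ → Bool, (∀ i j, c i j = c j i) → ∀ V : Finset ℕ, n ≤ V.card →
      monoOn c true s V ∨ monoOn c false t V := by
  induction k with
  | zero =>
    intro s t h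
    have hs0 : s = 0 := by omega
    subst hs0
    exact ⟨0, fun c _ V _ => Or.inl monoOn_zero⟩
  | succ k ih =>
    intro s t hst
    match s, t with
    | 0, t => exact ⟨0, fun c _ V _ => Or.inl monoOn_zero⟩
    | s+1, 0 => exact ⟨0, fun c _ V _ => Or.inr monoOn_zero⟩
    | s+1, t+1 =>
      obtain ⟨n₁, h₁⟩ := ih s (t+1) (by omega)
      obtain ⟨n₂, h₂⟩ := ih (s+1) t (by omega)
      refine ⟨n₁ + n₂ + 1, fun c hc V hV => ?_⟩
      obtain ⟨v, hv⟩ : ∃ v, v ∈ V := Finset.card_pos.mp (by omega)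
      set W := V.erase v with hWdef
      have hW : n₁ + n₂ ≤ W.card := by
        rw [hWdef, Finset.card_erase_of_mem hv]; omega
      set A := W.filter (fun w => c v w = true) with hAdef
      set B := W.filter (fun w => ¬ (c v w = true)) with hBdef
      have hAB : A.card + B.card = W.card := Finset.card_filter_add_card_filter_not _
      have hsub : A ⊆ V := (Finset.filter_subset _ _).trans (Finset.erase_subset _ _)
      have hsubB : B ⊆ V := (Finset.filter_subset _ _).trans (Finset.erase_subset _ _)
      rcases le_or_gt n₁ A.card with hA | hA
      · rcases h₁ c hc A hA with hred | hblue
        · obtain ⟨S, hSA, hcard, hmono⟩ := hred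
          left
          have hvS : v ∉ S := fun hmem => Finset.notMem_erase v V (hSA hmem |> Finset.filter_subset _ _)
          refine ⟨insert v S, Finset.insert_subset hv (hSA.trans hsub), ?_, ?_⟩
          · rw [Finset.card_insert_of_notMem hvS, hcard]
          · intro i hi j hj hij
            rcases Finset.mem_insert.mp hi with rfl | hiS
            · rcases Finset.mem_insert.mp hj with rfl | hjS
              · exact absurd rfl hij
              · have := hSA hjS; rw [hAdef, Finset.mem_filter] at this; exact this.2
            · rcases Finset.mem_insert.mp hj with rfl | hjS
              · have := hSA hiS; rw [hAdef, Finset.mem_filter] at this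
                rw [hc i j]; exact this.2
              · exact hmono i hiS j hjS hij
        · exact Or.inr (monoOn_mono hsub hblue)
      · have hB : n₂ ≤ B.card := by omega
        rcases h₂ c hc B hB with hred | hblue
        · exact Or.inl (monoOn_mono hsubB hred)
        · obtain ⟨S, hSB, hcard, hmono⟩ := hblue
          right
          have hvS : v ∉ S := fun hmem => Finset.notMem_erase v V (hSB hmem |> Finset.filter_subset _ _)
          refine ⟨insert v S, Finset.insert_subset hv (hSB.trans hsubB), ?_, ?_⟩
          · rw [Finset.card_insert_of_notMem hvS, hcard]
          · intro i hi j hj hij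
            rcases Finset.mem_insert.mp hi with rfl | hiS
            · rcases Finset.mem_insert.mp hj with rfl | hjS
              · exact absurd rfl hij
              · have := hSB hjS; rw [hBdef, Finset.mem_filter] at this
                simpa using this.2
            · rcases Finset.mem_insert.mp hj with rfl | hjS
              · have := hSB hiS; rw [hBdef, Finset.mem_filter] at this
                rw [hc i j]; simpa using this.2
              · exact hmono i hiS j hjS hij

lemma ramseyProp_exists (s t : ℕ) : ∃ N, ramseyProp N s t := by
  obtain ⟨n, hn⟩ := keyRamsey (s + t) s t le_rfl
  refine ⟨n, fun c => ?_⟩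
  set c' : ℕ → ℕ → Bool := fun i j =>
    if h : i < n ∧ j < n then c s(⟨i, h.1⟩, ⟨j, h.2⟩) else false with hc'def
  have hsymm : ∀ i j, c' i j = c' j i := by
    intro i j
    by_cases h : i < n ∧ j < n
    · rw [hc'def]; simp only [dif_pos h, dif_pos (And.intro h.2 h.1)]
      rw [Sym2.eq_swap]
    · rw [hc'def]
      simp only []
      rw [dif_neg h, dif_neg (fun h' => h ⟨h'.2, h'.1⟩)]
  have hlt : ∀ m ∈ Finset.range n, m < n := fun m hm => Finset.mem_range.mp hm
  rcases hn c' hsymm (Finset.range n) (by simp) with ⟨S, hSV, hcard, hmono⟩ | ⟨S, hSV, hcard, hmono⟩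
  · left
    have hS : ∀ m ∈ S, m < n := fun m hm => Finset.mem_range.mp (hSV hm)
    refine ⟨S.attachFin hS, by rw [Finset.card_attachFin, hcard], ?_⟩
    intro i hi j hj hij
    rw [Finset.mem_attachFin] at hi hj
    have hij' : (i : ℕ) ≠ (j : ℕ) := fun h => hij (Fin.ext h)
    have := hmono i hi j hj hij'
    rw [hc'def] at this
    simp only [dif_pos (And.intro i.isLt j.isLt)] at this
    simpa using this
  · right
    have hS : ∀ m ∈ S, m < n := fun m hm => Finset.mem_range.mp (hSV hm)
    refine ⟨S.attachFin hS, by rw [Finset.card_attachFin, hcard], ?_⟩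
    intro i hi j hj hij
    rw [Finset.mem_attachFin] at hi hj
    have hij' : (i : ℕ) ≠ (j : ℕ) := fun h => hij (Fin.ext h)
    have := hmono i hi j hj hij'
    rw [hc'def] at this
    simp only [dif_pos (And.intro i.isLt j.isLt)] at this
    simpa using this

lemma not_ramseyProp_of_good {N t : ℕ} (c : Sym2 (Fin N) → Bool)
    (h1 : ¬ hasMonoClique c true t) (h2 : ¬ hasMonoClique c false t)
    {m : ℕ} (hm : m ≤ N) : ¬ ramseyProp m t t := by
  intro hram
  set c' : Sym2 (Fin m) → Bool := fun p => c (p.map (Fin.castLE hm)) with hc'def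
  have key : ∀ col, hasMonoClique c' col t → hasMonoClique c col t := by
    rintro col ⟨S, hcard, hmono⟩
    refine ⟨S.map (Fin.castLEEmb hm), by rw [Finset.card_map, hcard], ?_⟩
    intro i hi j hj hij
    rw [Finset.mem_map] at hi hj
    obtain ⟨a, ha, rfl⟩ := hi
    obtain ⟨b, hb, rfl⟩ := hj
    have hab : a ≠ b := fun h => hij (by rw [h])
    have := hmono a ha b hb hab
    rw [hc'def] at this
    simpa using this
  rcases hram c' with h | h
  · exact h1 (key true h)
  · exact h2 (key false h)

lemma factorial_gt (t : ℕ) (ht : 3 ≤ t) :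
    2 * ((t : ℝ) / Real.exp 1) ^ t < (t.factorial : ℝ) := by
  have hT0 : (0:ℝ) < (t:ℝ) := by exact_mod_cast Nat.lt_of_lt_of_le (by norm_num) ht
  have hsum := Real.sum_le_exp_of_nonneg (le_of_lt hT0) (t+1)
  have hsub : ({0, t-1, t} : Finset ℕ) ⊆ Finset.range (t+1) := by
    intro x hx; simp only [Finset.mem_insert, Finset.mem_singleton] at hx
    rcases hx with rfl | rfl | rfl <;> simp [Finset.mem_range] <;> omega
  have hle : ∑ k ∈ ({0, t-1, t} : Finset ℕ), (t:ℝ)^k / (k.factorial : ℝ)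
      ≤ ∑ k ∈ Finset.range (t+1), (t:ℝ)^k / (k.factorial : ℝ) := by
    apply Finset.sum_le_sum_of_subset_of_nonneg hsub
    intro i _ _; positivity
  have hne1 : (0:ℕ) ∉ ({t-1, t} : Finset ℕ) := by simp; omega
  have hne2 : (t-1 : ℕ) ∉ ({t} : Finset ℕ) := by simp; omega
  have hsum3 : ∑ k ∈ ({0, t-1, t} : Finset ℕ), (t:ℝ)^k / (k.factorial : ℝ)
      = 1 + (t:ℝ)^(t-1) / ((t-1).factorial : ℝ) + (t:ℝ)^t / (t.factorial : ℝ) := by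
    rw [Finset.sum_insert hne1, Finset.sum_insert hne2, Finset.sum_singleton]
    ring_nf
  have heq : (t:ℝ)^(t-1) / ((t-1).factorial : ℝ) = (t:ℝ)^t / (t.factorial : ℝ) := by
    have h1 : (t:ℝ)^t = (t:ℝ)^(t-1) * (t:ℝ) := by
      rw [← pow_succ]; congr 1; omega
    have h2 : (t.factorial : ℝ) = (t:ℝ) * ((t-1).factorial : ℝ) := by
      rw [← Nat.cast_mul, Nat.mul_factorial_pred (by omega)]
    rw [h1, h2]
    rw [mul_comm ((t:ℝ)) (((t-1).factorial : ℝ))]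
    rw [mul_div_mul_right _ _ (ne_of_gt hT0)]
  have hexp : 2 * (t:ℝ)^t / (t.factorial : ℝ) < Real.exp (t:ℝ) := by
    have hr : 2 * (t:ℝ)^t / (t.factorial : ℝ)
        = (t:ℝ)^t / (t.factorial : ℝ) + (t:ℝ)^t / (t.factorial : ℝ) := by ring
    calc 2 * (t:ℝ)^t / (t.factorial : ℝ)
        < 1 + (t:ℝ)^(t-1) / ((t-1).factorial : ℝ) + (t:ℝ)^t / (t.factorial : ℝ) := by
          rw [heq, hr]; linarith
      _ ≤ _ := hsum3 ▸ (hle.trans hsum)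
  -- now: t! > 2 t^t / exp t = 2 (t/e)^t
  have hfac0 : (0:ℝ) < (t.factorial : ℝ) := by exact_mod_cast Nat.factorial_pos t
  have he : (0:ℝ) < Real.exp (t:ℝ) := Real.exp_pos _
  have h3 : 2 * (t:ℝ)^t < Real.exp (t:ℝ) * (t.factorial : ℝ) := by
    rw [div_lt_iff₀ hfac0] at hexp; linarith
  rw [div_pow, Real.exp_one_pow, mul_div_assoc', div_lt_iff₀ he]
  linarith [mul_comm ((t.factorial : ℝ)) (Real.exp (t:ℝ))]

lemma choose_bound (N t : ℕ) (ht : 3 ≤ t)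
    (hN : (N : ℝ) ≤ (1 / Real.exp 1) * t * (2 : ℝ) ^ (((t : ℝ) - 1) / 2)) :
    (2 : ℝ) ^ ((1 : ℝ) - (Nat.choose t 2 : ℝ)) * (Nat.choose N t : ℝ) < 1 := by
  set m : ℝ := (Nat.choose t 2 : ℝ) with hm
  have hT0 : (0:ℝ) < (t:ℝ) := by exact_mod_cast Nat.lt_of_lt_of_le (by norm_num) ht
  have hfac0 : (0:ℝ) < (t.factorial : ℝ) := by exact_mod_cast Nat.factorial_pos t
  have hB0 : (0:ℝ) ≤ (1 / Real.exp 1) * t * (2 : ℝ) ^ (((t : ℝ) - 1) / 2) := by positivity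
  -- choose bound
  have hchoose : (N.choose t : ℝ) * (t.factorial : ℝ) ≤ (N:ℝ) ^ t := by
    have h1 : N.choose t * t.factorial ≤ N ^ t := by
      calc N.choose t * t.factorial = t.factorial * N.choose t := by ring
        _ = N.descFactorial t := (Nat.descFactorial_eq_factorial_mul_choose N t).symm
        _ ≤ N ^ t := Nat.descFactorial_le_pow N t
    exact_mod_cast h1
  have hNpow : (N:ℝ) ^ t ≤ ((1 / Real.exp 1) * t * (2 : ℝ) ^ (((t : ℝ) - 1) / 2)) ^ t :=
    pow_le_pow_left₀ (by positivity) hN t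
  -- B^t = (t/e)^t * 2^m
  have h2m : ((2 : ℝ) ^ (((t : ℝ) - 1) / 2)) ^ t = (2:ℝ) ^ m := by
    rw [← Real.rpow_natCast ((2 : ℝ) ^ (((t : ℝ) - 1) / 2)) t,
      ← Real.rpow_mul (by norm_num)]
    congr 1
    rw [hm, Nat.cast_choose_two]
    ring
  have hBt : ((1 / Real.exp 1) * t * (2 : ℝ) ^ (((t : ℝ) - 1) / 2)) ^ t
      = ((t:ℝ) / Real.exp 1) ^ t * (2:ℝ) ^ m := by
    rw [mul_pow, h2m]
    congr 1
    congr 1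
    ring
  have hfact := factorial_gt t ht
  have h2m0 : (0:ℝ) < (2:ℝ) ^ m := Real.rpow_pos_of_pos (by norm_num) m
  have hte0 : (0:ℝ) < ((t:ℝ) / Real.exp 1) ^ t := by positivity
  -- C < 2^m / 2
  have hC : (N.choose t : ℝ) < (2:ℝ) ^ m / 2 := by
    have h4 : (N.choose t : ℝ) ≤ ((t:ℝ) / Real.exp 1) ^ t * (2:ℝ) ^ m / (t.factorial : ℝ) := by
      rw [le_div_iff₀ hfac0]
      calc (N.choose t : ℝ) * (t.factorial : ℝ) ≤ (N:ℝ) ^ t := hchoose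
        _ ≤ _ := hNpow.trans_eq hBt
    have h5 : ((t:ℝ) / Real.exp 1) ^ t * (2:ℝ) ^ m / (t.factorial : ℝ) < (2:ℝ) ^ m / 2 := by
      rw [div_lt_div_iff₀ hfac0 (by norm_num)]
      calc ((t:ℝ) / Real.exp 1) ^ t * (2:ℝ) ^ m * 2
          = (2 * ((t:ℝ) / Real.exp 1) ^ t) * (2:ℝ) ^ m := by ring
        _ < (t.factorial : ℝ) * (2:ℝ) ^ m := by
            exact mul_lt_mul_of_pos_right hfact h2m0
        _ = (2:ℝ) ^ m * (t.factorial : ℝ) := by ring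
    exact h4.trans_lt h5
  have hpos : (0:ℝ) < (2:ℝ) ^ ((1:ℝ) - m) := Real.rpow_pos_of_pos (by norm_num) _
  calc (2:ℝ) ^ ((1:ℝ) - m) * (N.choose t : ℝ)
      < (2:ℝ) ^ ((1:ℝ) - m) * ((2:ℝ) ^ m / 2) := by
        exact mul_lt_mul_of_pos_left hC hpos
    _ = 1 := by
        rw [div_eq_mul_inv, ← mul_assoc, ← Real.rpow_add (by norm_num : (0:ℝ) < 2)]
        norm_num

open Finset

lemma count_filter_eq {α : Type*} [Fintype α] [DecidableEq α] (D : Finset α) (col : Bool) :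
    (Finset.univ.filter (fun c : α → Bool => ∀ x ∈ D, c x = col)).card
      = 2 ^ (Fintype.card α - D.card) := by
  rw [← Fintype.card_subtype]
  have e : {c : α → Bool // ∀ x ∈ D, c x = col} ≃ ({x : α // x ∉ D} → Bool) := by
    refine ⟨fun c x => c.1 x.1, fun g => ⟨fun x => if h : x ∈ D then col else g ⟨x, h⟩, ?_⟩, ?_, ?_⟩
    · intro x hx; simp [hx]
    · rintro ⟨c, hc⟩
      ext x
      by_cases h : x ∈ D
      · simp [h, hc x h]
      · simp [h]
    · intro g
      funext x
      simp [x.2]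
  rw [Fintype.card_congr e, Fintype.card_fun, Fintype.card_bool,
    Fintype.card_subtype_compl, Fintype.card_coe]

def cliqueEdges {N : ℕ} (S : Finset (Fin N)) : Finset (Sym2 (Fin N)) :=
  S.sym2.filter (fun x => ¬ x.IsDiag)

lemma card_cliqueEdges {N : ℕ} (S : Finset (Fin N)) :
    (cliqueEdges S).card = S.card.choose 2 := by
  have hdiag : S.sym2.filter (fun x => x.IsDiag) = S.image Sym2.diag := by
    ext x
    simp only [mem_filter, mem_image]
    constructor
    · rintro ⟨hx, hd⟩
      induction x with
      | _ a b =>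
        rw [Sym2.mk_isDiag_iff] at hd
        subst hd
        exact ⟨a, (Finset.mk_mem_sym2_iff.mp hx).1, rfl⟩
    · rintro ⟨a, ha, rfl⟩
      exact ⟨Finset.mk_mem_sym2_iff.mpr ⟨ha, ha⟩, Sym2.mk_isDiag_iff.mpr rfl⟩
  have hcards : (S.sym2.filter (fun x => x.IsDiag)).card + (cliqueEdges S).card = S.sym2.card :=
    Finset.card_filter_add_card_filter_not (s := S.sym2) (p := fun x => x.IsDiag)
  have hdcard : (S.sym2.filter (fun x => x.IsDiag)).card = S.card := by
    rw [hdiag, Finset.card_image_of_injective _ Sym2.diag_injective]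
  rw [Finset.card_sym2] at hcards
  have hpascal : (S.card + 1).choose 2 = S.card.choose 2 + S.card := by
    rw [Nat.choose_succ_succ]
    simp [Nat.choose_one_right, Nat.add_comm]
  omega

lemma good_exists (N t : ℕ) (ht : 1 ≤ t) (h : 2 * N.choose t < 2 ^ t.choose 2) :
    ∃ c : Sym2 (Fin N) → Bool, ¬ hasMonoClique c true t ∧ ¬ hasMonoClique c false t := by
  classical
  set E := Fintype.card (Sym2 (Fin N)) with hE
  set bad := Finset.univ.filter
    (fun c : Sym2 (Fin N) → Bool => hasMonoClique c true t ∨ hasMonoClique c false t) with hbad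
  set P := (Finset.univ : Finset Bool) ×ˢ (Finset.univ : Finset (Fin N)).powersetCard t with hP
  have hsubset : bad ⊆ P.biUnion (fun p =>
      Finset.univ.filter (fun c : Sym2 (Fin N) → Bool => ∀ x ∈ cliqueEdges p.2, c x = p.1)) := by
    intro c hc
    rw [hbad, mem_filter] at hc
    have : ∃ col S, (S : Finset (Fin N)).card = t ∧ ∀ i ∈ S, ∀ j ∈ S, i ≠ j → c s(i, j) = col := by
      rcases hc.2 with ⟨S, h1, h2⟩ | ⟨S, h1, h2⟩
      exacts [⟨true, S, h1, h2⟩, ⟨false, S, h1, h2⟩]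
    obtain ⟨col, S, hcard, hmono⟩ := this
    rw [Finset.mem_biUnion]
    refine ⟨(col, S), ?_, ?_⟩
    · rw [hP, Finset.mem_product]
      exact ⟨Finset.mem_univ _, Finset.mem_powersetCard.mpr ⟨Finset.subset_univ _, hcard⟩⟩
    · rw [mem_filter]
      refine ⟨Finset.mem_univ _, ?_⟩
      intro x hx
      rw [cliqueEdges, mem_filter] at hx
      induction x with
      | _ a b =>
        obtain ⟨ha, hb⟩ := Finset.mk_mem_sym2_iff.mp hx.1
        have hab : a ≠ b := fun hh => hx.2 (Sym2.mk_isDiag_iff.mpr hh)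
        exact hmono a ha b hb hab
  have hcardbound : bad.card ≤ 2 * N.choose t * 2 ^ (E - t.choose 2) := by
    calc bad.card ≤ P.card * 2 ^ (E - t.choose 2) := by
          refine (Finset.card_le_card hsubset).trans ?_
          refine (Finset.card_biUnion_le).trans ?_
          apply Finset.sum_le_card_nsmul
          intro p hp
          rw [hP, Finset.mem_product, Finset.mem_powersetCard] at hp
          rw [count_filter_eq, card_cliqueEdges, hp.2.2]
      _ = 2 * N.choose t * 2 ^ (E - t.choose 2) := by
          rw [hP, Finset.card_product, Finset.card_univ, Fintype.card_bool,
            Finset.card_powersetCard, Finset.card_univ, Fintype.card_fin]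
  have hlt : bad.card < 2 ^ E := by
    by_cases htN : t ≤ N
    · have hmE : t.choose 2 ≤ E := by
        obtain ⟨S, -, hS⟩ := Finset.exists_subset_card_eq
          (s := (Finset.univ : Finset (Fin N))) (n := t) (by simpa using htN)
        calc t.choose 2 = (cliqueEdges S).card := by rw [card_cliqueEdges, hS]
          _ ≤ E := Finset.card_le_univ _
      calc bad.card ≤ 2 * N.choose t * 2 ^ (E - t.choose 2) := hcardbound
        _ < 2 ^ t.choose 2 * 2 ^ (E - t.choose 2) :=
            mul_lt_mul_of_pos_right h (Nat.pow_pos (by norm_num))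
        _ = 2 ^ E := by rw [← pow_add]; congr 1; omega
    · have hc0 : N.choose t = 0 := Nat.choose_eq_zero_of_lt (by omega)
      have : bad.card ≤ 0 := by
        calc bad.card ≤ 2 * N.choose t * 2 ^ (E - t.choose 2) := hcardbound
          _ = 0 := by rw [hc0]; ring
      have : bad.card = 0 := by omega
      rw [this]
      exact Nat.pow_pos (by norm_num)
  have huniv : (Finset.univ : Finset (Sym2 (Fin N) → Bool)).card = 2 ^ E := by
    rw [Finset.card_univ, Fintype.card_fun, Fintype.card_bool]
  have : bad ≠ Finset.univ := by
    intro hcontra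
    rw [hcontra, huniv] at hlt
    omega
  obtain ⟨c, hc⟩ : ∃ c, c ∉ bad := by
    by_contra hall
    push_neg at hall
    exact this (Finset.eq_univ_iff_forall.mpr hall)
  rw [hbad, mem_filter] at hc
  push_neg at hc
  exact ⟨c, hc (Finset.mem_univ c)⟩

theorem stmt4 (N t : ℕ) (ht : 3 ≤ t)
    (hN : (N : ℝ) ≤ (1 / Real.exp 1) * t * (2 : ℝ) ^ (((t : ℝ) - 1) / 2)) :
    (2 : ℝ) ^ ((1 : ℝ) - (Nat.choose t 2 : ℝ)) * (Nat.choose N t : ℝ) < 1 ∧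
    (∃ c : Sym2 (Fin N) → Bool,
      ¬ hasMonoClique c true t ∧ ¬ hasMonoClique c false t) ∧
    N < ramsey t t := by
  have part1 := choose_bound N t ht hN
  have hnat : 2 * N.choose t < 2 ^ t.choose 2 := by
    have hpow : ((2 ^ t.choose 2 : ℕ) : ℝ) = (2:ℝ) ^ ((t.choose 2 : ℕ) : ℝ) := by
      rw [Real.rpow_natCast]; push_cast; ring
    have hr : ((2 * N.choose t : ℕ) : ℝ) < ((2 ^ t.choose 2 : ℕ) : ℝ) := by
      have hpos : (0:ℝ) < (2:ℝ) ^ ((t.choose 2 : ℕ) : ℝ) :=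
        Real.rpow_pos_of_pos (by norm_num) _
      have h2 := mul_lt_mul_of_pos_left part1 hpos
      rw [mul_one, ← mul_assoc, ← Real.rpow_add (by norm_num : (0:ℝ) < 2)] at h2
      have he : ((t.choose 2 : ℕ) : ℝ) + ((1:ℝ) - (t.choose 2 : ℕ)) = 1 := by ring
      rw [he, Real.rpow_one] at h2
      rw [hpow]
      push_cast
      linarith
    exact_mod_cast hr
  obtain ⟨c, hc1, hc2⟩ := good_exists N t (by omega) hnat
  refine ⟨part1, ⟨c, hc1, hc2⟩, ?_⟩
  obtain ⟨M, hM⟩ := ramseyProp_exists t t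
  have hne : {n | ramseyProp n t t}.Nonempty := ⟨M, hM⟩
  have hmem : ramseyProp (ramsey t t) t t := Nat.sInf_mem hne
  by_contra hcon
  push_neg at hcon
  exact not_ramseyProp_of_good c hc1 hc2 hcon hmem
end

section
/- Let m ≥ 1 and let χ be a red/blue-colouring of the edges of the complete graph on [m] with no monochromatic clique of order t-1. Define a 4-colouring of the triples of binary strings of length m (viewed as integers in [0, 2^m)) as follows: for x < y < z with δ_1 = δ(x,y) and δ_2 = δ(y,z), where δ(x,y) is the largest index in which x and y differ, colour (x,y,z) by the pair (sign of δ_1 - δ_2, χ(δ_1, δ_2)). Then this 4-colouring of the triples of a set of size 2^m contains no monochromatic set of order t. -/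
lemma testBit_log2_self {n : ℕ} (hn : n ≠ 0) : n.testBit n.log2 = true := by
  have h1 : 2 ^ n.log2 ≤ n := (Nat.le_log2 hn).mp le_rfl
  have h2 : n < 2 ^ (n.log2 + 1) := (Nat.log2_lt hn).mp (Nat.lt_succ_self _)
  rw [Nat.testBit_eq_decide_div_mod_eq]
  have hdiv : n / 2 ^ n.log2 = 1 := by
    refine Nat.le_antisymm ?_ ((Nat.le_div_iff_mul_le (Nat.pow_pos (n := n.log2) two_pos)).mpr (by omega))
    have h3 : n / 2 ^ n.log2 < 2 := (Nat.div_lt_iff_lt_mul (Nat.pow_pos (n := n.log2) two_pos)).mpr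
      (by rw [pow_succ] at h2; omega)
    omega
  simp [hdiv]

lemma log2_eq_of {n d : ℕ} (h1 : n.testBit d = true) (h2 : ∀ j, d < j → n.testBit j = false) :
    n.log2 = d := by
  have hn : n ≠ 0 := by rintro rfl; simp at h1
  have hle : d ≤ n.log2 := (Nat.le_log2 hn).mpr (by
    by_contra h; push_neg at h
    rw [Nat.testBit_lt_two_pow h] at h1; exact Bool.false_ne_true h1)
  rcases Nat.lt_or_ge d n.log2 with h | h
  · have := h2 _ h
    rw [testBit_log2_self hn] at this; exact absurd this (by simp)
  · omega

lemma bits_of_lt {x y : ℕ} (h : x < y) :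
    x.testBit ((x ^^^ y).log2) = false ∧ y.testBit ((x ^^^ y).log2) = true ∧
    ∀ j, (x ^^^ y).log2 < j → x.testBit j = y.testBit j := by
  have hne : x ^^^ y ≠ 0 := by
    simp only [ne_eq, xor_eq_zero_iff]; omega
  set d := (x ^^^ y).log2 with hd
  have hbit : (x ^^^ y).testBit d = true := testBit_log2_self hne
  rw [Nat.testBit_xor] at hbit
  have hhi : ∀ j, d < j → x.testBit j = y.testBit j := by
    intro j hj
    have : (x ^^^ y).testBit j = false :=
      Nat.testBit_lt_two_pow (lt_of_lt_of_le ((Nat.log2_lt hne).mp hj)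
        (Nat.pow_le_pow_right two_pos le_rfl))
    rw [Nat.testBit_xor] at this
    rcases Bool.eq_false_or_eq_true (x.testBit j) with h1 | h1 <;>
      rcases Bool.eq_false_or_eq_true (y.testBit j) with h2 | h2 <;> simp [h1, h2] at this ⊢
  have key : x.testBit d = false ∧ y.testBit d = true := by
    cases hx : x.testBit d <;> cases hy : y.testBit d
    · simp [hx, hy] at hbit
    · exact ⟨rfl, rfl⟩
    · exact absurd (Nat.lt_of_testBit d hy hx fun j hj => (hhi j hj).symm) (by omega)
    · simp [hx, hy] at hbit
  exact ⟨key.1, key.2, hhi⟩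

lemma delta_ne {x y z : ℕ} (h1 : x < y) (h2 : y < z) : (x ^^^ y).log2 ≠ (y ^^^ z).log2 := by
  intro h
  have b1 := (bits_of_lt h1).2.1
  have b2 := (bits_of_lt h2).1
  rw [h] at b1; rw [b1] at b2; exact (by simp at b2 : False)

lemma delta_max {x y z : ℕ} (h1 : x < y) (h2 : y < z) :
    (x ^^^ z).log2 = max (x ^^^ y).log2 (y ^^^ z).log2 := by
  obtain ⟨hx1, hy1, hhi1⟩ := bits_of_lt h1
  obtain ⟨hy2, hz2, hhi2⟩ := bits_of_lt h2
  rcases (delta_ne h1 h2).lt_or_gt with h | h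
  · rw [max_eq_right h.le]
    apply log2_eq_of
    · rw [Nat.testBit_xor, hhi1 _ h, hy2, hz2]; rfl
    · intro j hj
      rw [Nat.testBit_xor, hhi1 _ (h.trans hj), hhi2 _ hj]; simp
  · rw [max_eq_left h.le]
    apply log2_eq_of
    · rw [Nat.testBit_xor, ← hhi2 _ h, hx1, hy1]; rfl
    · intro j hj
      rw [Nat.testBit_xor, hhi1 _ hj, hhi2 _ (h.trans hj)]; simp

/-- The Erdős–Hajnal stepping-up construction: if `χ` is a red/blue colouring of the
edges of the complete graph on `{0,...,m-1}` with no monochromatic clique of order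
`t-1`, then the 4-colouring of triples `x < y < z` of `{0,...,2^m - 1}` by the pair
`(δ₁ < δ₂ ?, χ δ₁ δ₂)`, where `δ₁ = δ(x,y)`, `δ₂ = δ(y,z)` and `δ(x,y)` is the largest
bit position where `x` and `y` differ (i.e. `Nat.log2 (x ^^^ y)`), has no monochromatic
set of order `t`. -/
theorem stmt8 (m t : ℕ) (hm : 1 ≤ m) (χ : ℕ → ℕ → Bool)
    (hsym : ∀ i j, χ i j = χ j i)
    (hχ : ¬ ∃ T : Finset ℕ, T ⊆ Finset.range m ∧ T.card = t - 1 ∧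
      ∃ b : Bool, ∀ i ∈ T, ∀ j ∈ T, i ≠ j → χ i j = b) :
    ¬ ∃ S : Finset ℕ, S ⊆ Finset.range (2 ^ m) ∧ S.card = t ∧
      ∃ p : Bool × Bool, ∀ x ∈ S, ∀ y ∈ S, ∀ z ∈ S, x < y → y < z →
        (decide (Nat.log2 (x ^^^ y) < Nat.log2 (y ^^^ z)),
          χ (Nat.log2 (x ^^^ y)) (Nat.log2 (y ^^^ z))) = p := by
  rintro ⟨S, hSsub, hScard, ⟨b1, b2⟩, hmono⟩
  apply hχ
  by_cases ht : t ≤ 2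
  · obtain ⟨T, hT, hTcard⟩ := Finset.exists_subset_card_eq (s := Finset.range m) (n := t - 1)
      (by rw [Finset.card_range]; omega)
    refine ⟨T, hT, hTcard, b2, fun i hi j hj hij => ?_⟩
    exact absurd (Finset.card_le_one.mp (by omega) i hi j hj) hij
  push_neg at ht
  have ht0 : 0 < t := by omega
  set e := S.orderEmbOfFin hScard with he
  set x : ℕ → ℕ := fun i => e ⟨i % t, Nat.mod_lt _ ht0⟩ with hx
  have hxmem : ∀ i, x i ∈ S := fun i => S.orderEmbOfFin_mem hScard _
  have hxmono : ∀ i j, i < j → j < t → x i < x j := by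
    intro i j hij hjt
    exact e.strictMono (show (⟨i % t, _⟩ : Fin t) < ⟨j % t, _⟩ by
      simp only [Fin.mk_lt_mk]
      rw [Nat.mod_eq_of_lt (by omega), Nat.mod_eq_of_lt hjt]; exact hij)
  set δ : ℕ → ℕ := fun i => Nat.log2 (x i ^^^ x (i + 1)) with hδ
  have htriple : ∀ i j k, i < j → j < k → k < t →
      decide (Nat.log2 (x i ^^^ x j) < Nat.log2 (x j ^^^ x k)) = b1 ∧
      χ (Nat.log2 (x i ^^^ x j)) (Nat.log2 (x j ^^^ x k)) = b2 := by
    intro i j k hij hjk hkt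
    have h := hmono _ (hxmem i) _ (hxmem j) _ (hxmem k)
      (hxmono i j hij (by omega)) (hxmono j k hjk hkt)
    rw [Prod.mk.injEq] at h
    exact h
  have hne : ∀ i, i + 2 < t → δ i ≠ δ (i + 1) := by
    intro i hi
    exact delta_ne (hxmono i (i + 1) (by omega) (by omega))
      (hxmono (i + 1) (i + 1 + 1) (by omega) (by omega))
  -- key pair fact
  have hpair : ∀ i k, i < k → k + 1 < t → χ (δ i) (δ k) = b2 ∧ δ i ≠ δ k := by
    cases hb1 : b1
    · -- decreasing case
      have hstep : ∀ i, i + 2 < t → δ (i + 1) < δ i := by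
        intro i hi
        have := (htriple i (i + 1) (i + 1 + 1) (by omega) (by omega) hi).1
        rw [hb1, decide_eq_false_iff_not] at this
        have h2 := hne i hi
        simp only [hδ] at h2 ⊢
        omega
      have hdec : ∀ j, j + 1 < t → ∀ i, i < j → δ j < δ i := by
        intro j
        induction j with
        | zero => intro _ i hi; omega
        | succ j ih =>
          intro hjt i hij
          have h1 : δ (j + 1) < δ j := hstep j (by omega)
          rcases Nat.lt_or_ge i j with h | h
          · exact h1.trans (ih (by omega) i h)
          · have : i = j := by omega
            rw [this]; exact h1
      have hchain : ∀ i j, i + 1 ≤ j → j < t → Nat.log2 (x i ^^^ x j) = δ i := by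
        intro i j hij
        induction j, hij using Nat.le_induction with
        | base => intro _; rfl
        | succ j hij ih =>
          intro hjt
          have h2 := delta_max (hxmono i j (by omega) (by omega))
            (hxmono j (j + 1) (by omega) hjt)
          rw [h2, ih (by omega)]
          exact Nat.max_eq_left (hdec j hjt i (by omega)).le
      intro i k hik hkt
      have h := (htriple i k (k + 1) hik (by omega) hkt).2
      rw [hchain i k (by omega) (by omega)] at h
      exact ⟨h, (hdec k (by omega) i hik).ne'⟩
    · -- increasing case
      have hstep : ∀ i, i + 2 < t → δ i < δ (i + 1) := by
        intro i hi
        have := (htriple i (i + 1) (i + 1 + 1) (by omega) (by omega) hi).1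
        rw [hb1, decide_eq_true_eq] at this
        exact this
      have hinc : ∀ j, j + 1 < t → ∀ i, i < j → δ i < δ j := by
        intro j
        induction j with
        | zero => intro _ i hi; omega
        | succ j ih =>
          intro hjt i hij
          have h1 : δ j < δ (j + 1) := hstep j (by omega)
          rcases Nat.lt_or_ge i j with h | h
          · exact (ih (by omega) i h).trans h1
          · have : i = j := by omega
            rw [this]; exact h1
      have hchain : ∀ i j, i + 1 ≤ j → j < t → Nat.log2 (x i ^^^ x j) = δ (j - 1) := by
        intro i j hij
        induction j, hij using Nat.le_induction with
        | base => intro _; simp; rfl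
        | succ j hij ih =>
          intro hjt
          have h2 := delta_max (hxmono i j (by omega) (by omega))
            (hxmono j (j + 1) (by omega) hjt)
          rw [h2, ih (by omega)]
          simp only [Nat.add_sub_cancel]
          exact Nat.max_eq_right (hinc j hjt (j - 1) (by omega)).le
      intro i k hik hkt
      have h := (htriple i (i + 1) (k + 1) (by omega) (by omega) hkt).2
      rw [hchain (i + 1) (k + 1) (by omega) (by omega)] at h
      simp only [Nat.add_sub_cancel] at h
      exact ⟨h, (hinc k (by omega) i hik).ne⟩
  -- build T
  refine ⟨(Finset.range (t - 1)).image δ, ?_, ?_, b2, ?_⟩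
  · intro a ha
    obtain ⟨i, hi, rfl⟩ := Finset.mem_image.mp ha
    rw [Finset.mem_range] at hi ⊢
    have hx1 : x i < 2 ^ m := by
      have := hSsub (hxmem i); rwa [Finset.mem_range] at this
    have hx2 : x (i + 1) < 2 ^ m := by
      have := hSsub (hxmem (i + 1)); rwa [Finset.mem_range] at this
    have hxor : x i ^^^ x (i + 1) < 2 ^ m := Nat.xor_lt_two_pow hx1 hx2
    have hne0 : x i ^^^ x (i + 1) ≠ 0 := by
      simp only [ne_eq, xor_eq_zero_iff]
      exact (hxmono i (i + 1) (by omega) (by omega)).ne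
    exact (Nat.log2_lt hne0).mpr hxor
  · rw [Finset.card_image_of_injOn, Finset.card_range]
    intro i hi j hj hij
    rw [Finset.mem_coe, Finset.mem_range] at hi hj
    by_contra hne'
    rcases Ne.lt_or_gt hne' with h | h
    · exact (hpair i j h (by omega)).2 hij
    · exact (hpair j i h (by omega)).2 hij.symm
  · intro a ha b hb hab
    obtain ⟨i, hi, rfl⟩ := Finset.mem_image.mp ha
    obtain ⟨j, hj, rfl⟩ := Finset.mem_image.mp hb
    rw [Finset.mem_range] at hi hj
    rcases Nat.lt_trichotomy i j with h | h | h
    · exact (hpair i j h (by omega)).1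
    · exact absurd (by rw [h]) hab
    · rw [hsym]; exact (hpair j i h (by omega)).1
end

section
/- Let G be a connected graph and H a graph with chromatic number χ(H). Let σ(H) be the minimum size of a colour class over all proper vertex colourings of H with exactly χ(H) colours. If |V(G)| ≥ σ(H), then r(G, H) ≥ (|V(G)| - 1)(χ(H) - 1) + σ(H). -/
/-- The graph `R` contains a copy of the graph `G`. -/
def containsCopy {V W : Type*} (R : SimpleGraph V) (G : SimpleGraph W) : Prop :=
  ∃ f : W ↪ V, ∀ a b : W, G.Adj a b → R.Adj (f a) (f b)

/-- The graph Ramsey number `r(G, H)`: the least `N` such that every red/blue colouring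
of the edges of `K_N` (given by its red graph `R`, with blue graph `Rᶜ`) contains a red
copy of `G` or a blue copy of `H`. -/
noncomputable def grRamsey {V W : Type*} (G : SimpleGraph V) (H : SimpleGraph W) : ℕ :=
  sInf {N | ∀ R : SimpleGraph (Fin N), containsCopy R G ∨ containsCopy Rᶜ H}

open Finset

/-- Extending a clique by a vertex adjacent to all of it. -/
lemma clique_insert {α : Type*} [DecidableEq α] (R : SimpleGraph α) (v : α) (K : Finset α)
    (h1 : ∀ x ∈ K, R.Adj v x)
    (h2 : ∀ x ∈ K, ∀ y ∈ K, x ≠ y → R.Adj x y) :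
    ∀ x ∈ insert v K, ∀ y ∈ insert v K, x ≠ y → R.Adj x y := by
  intro x hx y hy hxy
  rcases mem_insert.mp hx with hx' | hx'
  · rcases mem_insert.mp hy with hy' | hy'
    · exact absurd (hx'.trans hy'.symm) hxy
    · exact hx' ▸ h1 y hy'
  · rcases mem_insert.mp hy with hy' | hy'
    · exact (hy' ▸ h1 x hx').symm
    · exact h2 x hx' y hy' hxy

/-- Finite Ramsey theorem with the crude bound `(s+t).choose s`. -/
lemma ramsey_aux : ∀ n s t : ℕ, s + t ≤ n → ∀ {α : Type} (R : SimpleGraph α)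
    (A : Finset α), (s + t).choose s ≤ A.card →
    (∃ K ⊆ A, K.card = s ∧ ∀ x ∈ K, ∀ y ∈ K, x ≠ y → R.Adj x y) ∨
    (∃ K ⊆ A, K.card = t ∧ ∀ x ∈ K, ∀ y ∈ K, x ≠ y → ¬ R.Adj x y) := by
  intro n
  induction n with
  | zero =>
    intro s t hst α R A _
    have hs : s = 0 := by omega
    subst hs
    exact Or.inl ⟨∅, empty_subset _, card_empty, by simp⟩
  | succ n ih =>
    intro s t hst α R A hA
    classical
    match s, t with
    | 0, t => exact Or.inl ⟨∅, empty_subset _, card_empty, by simp⟩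
    | s+1, 0 => exact Or.inr ⟨∅, empty_subset _, card_empty, by simp⟩
    | s+1, t+1 =>
      have hpascal : (s + 1 + (t + 1)).choose (s + 1)
          = (s + (t + 1)).choose s + (s + 1 + t).choose (s + 1) := by
        have h1 : s + 1 + (t + 1) = (s + 1 + t) + 1 := by omega
        have h2 : s + (t + 1) = s + 1 + t := by omega
        rw [h1, h2, Nat.choose_succ_succ]
      have hApos : 0 < A.card := by
        have : 0 < (s + 1 + (t + 1)).choose (s + 1) :=
          Nat.choose_pos (by omega)
        omega
      obtain ⟨v, hv⟩ := card_pos.mp hApos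
      set Nr := (A.erase v).filter (fun u => R.Adj v u) with hNr
      set Nb := (A.erase v).filter (fun u => ¬ R.Adj v u) with hNb
      have hcards : Nr.card + Nb.card = A.card - 1 := by
        rw [hNr, hNb, card_filter_add_card_filter_not, card_erase_of_mem hv]
      have hkey : (s + (t + 1)).choose s ≤ Nr.card ∨
          (s + 1 + t).choose (s + 1) ≤ Nb.card := by omega
      rcases hkey with hkey | hkey
      · rcases ih s (t + 1) (by omega) R Nr hkey with ⟨K, hKA, hKc, hKcl⟩ | ⟨K, hKA, hKc, hKcl⟩
        · -- red clique of size s in the red neighbourhood of v: add v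
          have hvK : v ∉ K := fun hvk => by
            have := hKA hvk
            rw [hNr, mem_filter] at this
            exact (R.loopless.irrefl v) this.2
          refine Or.inl ⟨insert v K, ?_, ?_, ?_⟩
          · intro x hx
            rcases mem_insert.mp hx with rfl | hx
            · exact hv
            · exact (erase_subset _ _) ((filter_subset _ _) (hKA hx))
          · rw [card_insert_of_notMem hvK, hKc]
          · exact clique_insert R v K (fun x hx => (mem_filter.mp (hKA hx)).2) hKcl
        · exact Or.inr ⟨K, hKA.trans ((filter_subset _ _).trans (erase_subset _ _)), hKc, hKcl⟩
      · rcases ih (s + 1) t (by omega) R Nb hkey with ⟨K, hKA, hKc, hKcl⟩ | ⟨K, hKA, hKc, hKcl⟩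
        · exact Or.inl ⟨K, hKA.trans ((filter_subset _ _).trans (erase_subset _ _)), hKc, hKcl⟩
        · have hvK : v ∉ K := fun hvk => by
            have := hKA hvk
            rw [hNb, mem_filter] at this
            exact (notMem_erase v A) this.1
          refine Or.inr ⟨insert v K, ?_, ?_, ?_⟩
          · intro x hx
            rcases mem_insert.mp hx with rfl | hx
            · exact hv
            · exact (erase_subset _ _) ((filter_subset _ _) (hKA hx))
          · rw [card_insert_of_notMem hvK, hKc]
          · intro x hx y hy hxy h
            exact clique_insert Rᶜ v K
              (fun x hx => (SimpleGraph.compl_adj R v x).mpr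
                ⟨fun he => notMem_erase v A (he ▸ (mem_filter.mp (hKA hx)).1),
                  (mem_filter.mp (hKA hx)).2⟩)
              (fun x hx y hy hxy => (SimpleGraph.compl_adj R x y).mpr
                ⟨hxy, hKcl x hx y hy hxy⟩) x hx y hy hxy |>.2 h

/-- A clique of the right size yields a copy of any graph on that many vertices. -/
lemma copy_of_clique {V : Type*} [Fintype V] {N : ℕ} (G : SimpleGraph V)
    (R : SimpleGraph (Fin N)) (K : Finset (Fin N)) (hK : K.card = Fintype.card V)
    (hcl : ∀ x ∈ K, ∀ y ∈ K, x ≠ y → R.Adj x y) : containsCopy R G := by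
  have hcard : Fintype.card V = Fintype.card ↥K := by rw [Fintype.card_coe, hK]
  let e : V ≃ ↥K := Fintype.equivOfCardEq hcard
  refine ⟨e.toEmbedding.trans (Function.Embedding.subtype _), fun a b hab => ?_⟩
  refine hcl _ (e a).2 _ (e b).2 ?_
  intro h
  exact G.ne_of_adj hab (e.injective (Subtype.ext h))

theorem stmt11 {V W : Type*} [Fintype V] [Fintype W]
    (G : SimpleGraph V) (H : SimpleGraph W) (hG : G.Connected)
    (k : ℕ) (hk : H.chromaticNumber = (k : ℕ∞))
    (σ : ℕ)
    (hσ : σ = sInf {s | ∃ C : H.Coloring (Fin k), ∃ i : Fin k,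
      s = (Finset.univ.filter (fun v => C v = i)).card})
    (hcard : σ ≤ Fintype.card V) :
    (Fintype.card V - 1) * (k - 1) + σ ≤ grRamsey G H := by
  classical
  set n := Fintype.card V with hn
  -- trivial case k = 0
  rcases Nat.eq_zero_or_pos k with hk0 | hkpos
  · subst hk0
    have : σ = 0 := by
      rw [hσ]
      convert Nat.sInf_empty
      rw [Set.eq_empty_iff_forall_notMem]
      rintro s ⟨C, i, -⟩
      exact i.elim0
    simp [this]
  -- now k ≥ 1
  have hV : Nonempty V := hG.nonempty
  have hn1 : 1 ≤ n := Fintype.card_pos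
  have hW : Nonempty W := by
    by_contra h
    rw [not_nonempty_iff] at h
    have h0 := H.chromaticNumber_eq_zero_iff.mpr h
    rw [hk] at h0
    have : k = 0 := by exact_mod_cast h0
    omega
  -- every colour class of a `Fin k`-colouring is nonempty
  have hclass : ∀ (C : H.Coloring (Fin k)) (i : Fin k),
      0 < (Finset.univ.filter (fun v => C v = i)).card := by
    intro C i
    rw [Finset.card_pos]
    by_contra h
    rw [Finset.not_nonempty_iff_eq_empty, Finset.filter_eq_empty_iff] at h
    have hne : ∀ v, C v ≠ i := fun v => h (Finset.mem_univ v)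
    let C' : H.Coloring {j : Fin k // j ≠ i} :=
      SimpleGraph.Coloring.mk (fun v => ⟨C v, hne v⟩)
        (fun hab h => C.valid hab (congrArg Subtype.val h))
    have hcol : H.Colorable (Fintype.card {j : Fin k // j ≠ i}) := C'.colorable
    have hle := hcol.chromaticNumber_le
    rw [hk] at hle
    have hcardlt : Fintype.card {j : Fin k // j ≠ i} < k := by
      have := Fintype.card_subtype_lt (p := fun j : Fin k => j ≠ i) (x := i) (by simp)
      simpa using this
    have : k ≤ Fintype.card {j : Fin k // j ≠ i} := by exact_mod_cast hle
    omega
  -- the defining set of σ is nonempty, hence σ ≥ 1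
  have hcolk : H.Colorable k := SimpleGraph.chromaticNumber_le_iff_colorable.mp (le_of_eq hk)
  obtain ⟨C0⟩ := hcolk
  have hσmem : σ ∈ {s | ∃ C : H.Coloring (Fin k), ∃ i : Fin k,
      s = (Finset.univ.filter (fun v => C v = i)).card} := by
    rw [hσ]
    exact Nat.sInf_mem ⟨_, C0, ⟨0, hkpos⟩, rfl⟩
  have hσ1 : 1 ≤ σ := by
    obtain ⟨C, i, hCi⟩ := hσmem
    rw [hCi]
    exact hclass C i
  -- nonemptiness of the Ramsey set
  have hSne : {N | ∀ R : SimpleGraph (Fin N), containsCopy R G ∨ containsCopy Rᶜ H}.Nonempty := by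
    refine ⟨(Fintype.card V + Fintype.card W).choose (Fintype.card V), fun R => ?_⟩
    rcases ramsey_aux (Fintype.card V + Fintype.card W) (Fintype.card V) (Fintype.card W)
        le_rfl R Finset.univ (by simp) with ⟨K, _, hKc, hKcl⟩ | ⟨K, _, hKc, hKcl⟩
    · exact Or.inl (copy_of_clique G R K hKc hKcl)
    · refine Or.inr (copy_of_clique H Rᶜ K hKc ?_)
      intro x hx y hy hxy
      exact (SimpleGraph.compl_adj R x y).mpr ⟨hxy, hKcl x hx y hy hxy⟩
  rw [grRamsey]
  refine le_csInf hSne ?_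
  intro N hN
  by_contra hlt
  push_neg at hlt
  -- N = 0 is impossible
  rcases Nat.eq_zero_or_pos N with rfl | hNpos
  · rcases hN ⊥ with ⟨f, -⟩ | ⟨f, -⟩
    · exact (f (Classical.arbitrary V)).elim0
    · exact (f (Classical.arbitrary W)).elim0
  -- n = 1 is impossible
  rcases Nat.lt_or_ge n 2 with hn2 | hn2
  · have : n = 1 := by omega
    rw [this] at hlt
    simp at hlt
    omega
  -- main construction
  set m := n - 1 with hm
  have hm1 : 1 ≤ m := by omega
  have hNle : N + 1 ≤ m * (k - 1) + σ := hlt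
  set β : Fin N → Fin k := fun x => ⟨min (x.val / m) (k - 1), by omega⟩ with hβ
  have claimB : ∀ x : Fin N, m * (β x).val ≤ x.val := by
    intro x
    have h1 : (β x).val ≤ x.val / m := min_le_left _ _
    calc m * (β x).val ≤ m * (x.val / m) := Nat.mul_le_mul_left m h1
      _ ≤ x.val := Nat.mul_div_le _ _
  have claimA : ∀ x : Fin N, x.val - m * (β x).val < m := by
    intro x
    by_cases h : x.val / m ≤ k - 1
    · have hβx : (β x).val = x.val / m := min_eq_left h
      have h1 := Nat.div_add_mod x.val m
      have h2 : x.val % m < m := Nat.mod_lt _ hm1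
      rw [hβx]
      omega
    · have hβx : (β x).val = k - 1 := min_eq_right (by omega)
      rw [hβx]
      have hx : x.val < N := x.2
      have hσn : σ ≤ m + 1 := by omega
      set c := m * (k - 1) with hc
      omega
  set R : SimpleGraph (Fin N) :=
    { Adj := fun x y => x ≠ y ∧ β x = β y
      symm := ⟨fun x y h => ⟨h.1.symm, h.2.symm⟩⟩
      loopless := ⟨fun x h => h.1 rfl⟩ } with hR
  rcases hN R with ⟨f, hf⟩ | ⟨f, hf⟩
  · -- red copy of G: impossible since G is connected and blocks are small
    have hwalk : ∀ (a b : V) (w : G.Walk a b), β (f a) = β (f b) := by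
      intro a b w
      induction w with
      | nil => rfl
      | cons h p ih => exact ((hf _ _ h).2).trans ih
    obtain ⟨a0⟩ := hV
    have hconst : ∀ a : V, β (f a) = β (f a0) := fun a =>
      (hG.preconnected a a0).elim (hwalk a a0)
    have hinj : Function.Injective (fun v : V => (⟨(f v).val - m * (β (f a0)).val,
        by rw [← hconst v]; exact claimA (f v)⟩ : Fin m)) := by
      intro v w hvw
      have h1 : (f v).val - m * (β (f a0)).val = (f w).val - m * (β (f a0)).val := by
        simpa using congrArg Fin.val hvw
      have h2 : m * (β (f a0)).val ≤ (f v).val := by rw [← hconst v]; exact claimB (f v)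
      have h3 : m * (β (f a0)).val ≤ (f w).val := by rw [← hconst w]; exact claimB (f w)
      have : (f v).val = (f w).val := by omega
      exact f.injective (Fin.ext this)
    have := Fintype.card_le_of_injective _ hinj
    rw [Fintype.card_fin] at this
    omega
  · -- blue copy of H: impossible, the last block is too small
    have hβne : ∀ a b : W, H.Adj a b → β (f a) ≠ β (f b) := by
      intro a b h he
      have h2 := hf a b h
      rw [SimpleGraph.compl_adj] at h2
      exact h2.2 ⟨h2.1, he⟩
    let C : H.Coloring (Fin k) := SimpleGraph.Coloring.mk (fun w => β (f w))
      (fun hab => hβne _ _ hab)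
    set i : Fin k := ⟨k - 1, by omega⟩ with hi
    have hs : σ ≤ (Finset.univ.filter (fun v => C v = i)).card :=
      hσ ▸ Nat.sInf_le ⟨C, i, rfl⟩
    have hbound : (Finset.univ.filter (fun v => C v = i)).card ≤
        (Finset.Ico (m * (k - 1)) N).card := by
      refine Finset.card_le_card_of_injOn (fun w => (f w).val) ?_ ?_
      · intro w hw
        rw [Finset.mem_coe, Finset.mem_filter] at hw
        have hwi : (β (f w)).val = k - 1 := by
          have : C w = i := hw.2
          rw [hi] at this
          exact congrArg Fin.val this
        rw [Finset.mem_coe, Finset.mem_Ico]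
        refine ⟨?_, (f w).2⟩
        have := claimB (f w)
        rw [hwi] at this
        exact this
      · intro a _ b _ hab
        exact f.injective (Fin.ext hab)
    rw [Nat.card_Ico] at hbound
    set c := m * (k - 1) with hc
    omega
end

section
/- For every graph H with chromatic number t, the chromatic Ramsey number satisfies r_χ(H) ≥ (t-1)² + 1, where r_χ(H) is the minimum chromatic number of a graph G such that every 2-colouring of the edges of G contains a monochromatic copy of H. -/
/-- `G` is Ramsey for `H`: every 2-colouring of the edges of `G` (red subgraph `R ≤ G`,
blue graph `G \ R`) contains a monochromatic copy of `H`. -/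
def isRamseyForGraph {V W : Type*} (G : SimpleGraph V) (H : SimpleGraph W) : Prop :=
  ∀ R : SimpleGraph V, R ≤ G → containsCopy R H ∨ containsCopy (G \ R) H

/-- The chromatic Ramsey number `r_χ(H)`: the minimum chromatic number of a graph which
is Ramsey for `H`. -/
noncomputable def chromRamsey {W : Type*} (H : SimpleGraph W) : ℕ :=
  sInf {k : ℕ | ∃ (n : ℕ) (G : SimpleGraph (Fin n)),
    isRamseyForGraph G H ∧ G.chromaticNumber = (k : ℕ∞)}

open Classical in
/-- A recursive Ramsey bound. -/
def rnum : ℕ → ℕ → ℕ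
  | 0, _ => 0
  | _+1, 0 => 0
  | s+1, u+1 => rnum s (u+1) + rnum (s+1) u + 1

open Finset in
/-- Finite Ramsey's theorem, localized to a finset `S`. -/
theorem ramsey_aux_s14 {V : Type*} [DecidableEq V] (R : SimpleGraph V) [DecidableRel R.Adj] :
    ∀ s u : ℕ, ∀ S : Finset V, rnum s u ≤ S.card →
      (∃ A ⊆ S, R.IsNClique s A) ∨ (∃ A ⊆ S, Rᶜ.IsNClique u A) := by
  intro s
  induction s with
  | zero => intro u S _; exact Or.inl ⟨∅, by simp⟩
  | succ s ihs =>
    intro u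
    induction u with
    | zero => intro S _; exact Or.inr ⟨∅, by simp⟩
    | succ u ihu =>
      intro S hS
      simp only [rnum] at hS
      obtain ⟨v, hv⟩ : S.Nonempty := Finset.card_pos.mp (by omega)
      set T := S.erase v with hT
      have hTcard : T.card = S.card - 1 := Finset.card_erase_of_mem hv
      set A := T.filter (fun w => R.Adj v w) with hA
      set B := T.filter (fun w => ¬ R.Adj v w) with hB
      have hAB : A.card + B.card = T.card := Finset.card_filter_add_card_filter_not _
      have hcases : rnum s (u+1) ≤ A.card ∨ rnum (s+1) u ≤ B.card := by omega
      rcases hcases with h | h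
      · rcases ihs (u+1) A h with ⟨A', hA'sub, hA'⟩ | ⟨A', hA'sub, hA'⟩
        · -- red s-clique among neighbours of v: add v
          refine Or.inl ⟨insert v A', ?_, ?_⟩
          · intro x hx
            rcases Finset.mem_insert.mp hx with rfl | hx
            · exact hv
            · exact Finset.mem_of_mem_erase (Finset.mem_of_mem_filter x (hA'sub hx))
          · refine hA'.insert (fun b hb => ?_)
            exact (Finset.mem_filter.mp (hA'sub hb)).2
        · exact Or.inr ⟨A', fun x hx =>
            Finset.mem_of_mem_erase (Finset.mem_of_mem_filter x (hA'sub hx)), hA'⟩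
      · rcases ihu B h with ⟨A', hA'sub, hA'⟩ | ⟨A', hA'sub, hA'⟩
        · exact Or.inl ⟨A', fun x hx =>
            Finset.mem_of_mem_erase (Finset.mem_of_mem_filter x (hA'sub hx)), hA'⟩
        · refine Or.inr ⟨insert v A', ?_, ?_⟩
          · intro x hx
            rcases Finset.mem_insert.mp hx with rfl | hx
            · exact hv
            · exact Finset.mem_of_mem_erase (Finset.mem_of_mem_filter x (hA'sub hx))
          · refine hA'.insert (fun b hb => ?_)
            have hbT := hA'sub hb
            have hbne : b ≠ v := Finset.ne_of_mem_erase (Finset.mem_of_mem_filter b hbT)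
            exact ⟨hbne.symm, (Finset.mem_filter.mp hbT).2⟩

/-- A clique of size `card W` gives a copy of any graph on `W`. -/
theorem containsCopy_of_clique {V W : Type*} [Fintype W] {R : SimpleGraph V}
    (H : SimpleGraph W) {A : Finset V} (hA : R.IsNClique (Fintype.card W) A) :
    containsCopy R H := by
  have : Fintype.card W = A.card := hA.card_eq.symm
  have e : W ≃ ↥A := (Fintype.equivFin W).trans
    (Fintype.equivFinOfCardEq (by simp [← this])).symm
  refine ⟨⟨fun w => (e w : V), fun a b hab => ?_⟩, fun a b hab => ?_⟩
  · have := Subtype.coe_injective hab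
    exact e.injective this
  · refine hA.1 (e a).2 (e b).2 ?_
    intro hcontra
    exact hab.ne (e.injective (Subtype.coe_injective hcontra))

/-- The complete graph on `rnum m m` vertices is Ramsey for any graph on `m` vertices. -/
theorem ramsey_set_nonempty {W : Type*} [Fintype W] (H : SimpleGraph W) :
    ∃ k : ℕ, ∃ (n : ℕ) (G : SimpleGraph (Fin n)),
      isRamseyForGraph G H ∧ G.chromaticNumber = (k : ℕ∞) := by
  classical
  set m := Fintype.card W
  refine ⟨rnum m m, rnum m m, ⊤, ?_, by simp [SimpleGraph.chromaticNumber_top]⟩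
  intro R _
  have := ramsey_aux_s14 R m m Finset.univ (by simp)
  rcases this with ⟨A, _, hA⟩ | ⟨A, _, hA⟩
  · exact Or.inl (containsCopy_of_clique H hA)
  · refine Or.inr ?_
    have hEq : (⊤ : SimpleGraph (Fin (rnum m m))) \ R = Rᶜ := by
      ext a b; simp [and_comm]
    rw [hEq]
    exact containsCopy_of_clique H hA

theorem stmt14 {W : Type*} [Fintype W] (H : SimpleGraph W) (t : ℕ) (ht : 1 ≤ t)
    (hχ : H.chromaticNumber = (t : ℕ∞)) :
    (t - 1) ^ 2 + 1 ≤ chromRamsey H := by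
  classical
  refine le_csInf ?_ ?_
  · obtain ⟨k, hk⟩ := ramsey_set_nonempty H
    exact ⟨k, hk⟩
  rintro k ⟨n, G, hram, hcol⟩
  by_contra hlt
  push_neg at hlt
  have hk : k ≤ (t - 1) ^ 2 := by omega
  -- G is colourable with (t-1)^2 colours
  have hGcol : G.Colorable ((t - 1) ^ 2) := by
    rw [← SimpleGraph.chromaticNumber_le_iff_colorable, hcol]
    exact_mod_cast hk
  obtain ⟨C⟩ := hGcol
  -- recolour into Fin (t-1) × Fin (t-1)
  let d : Fin n → Fin (t - 1) × Fin (t - 1) := fun v =>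
    finProdFinEquiv.symm (Fin.cast (sq (t - 1)) (C v))
  have hd : ∀ {a b}, G.Adj a b → d a ≠ d b := by
    intro a b hab hEq
    apply C.valid hab
    have := finProdFinEquiv.symm.injective hEq
    exact Fin.cast_injective _ this
  -- red graph
  let R : SimpleGraph (Fin n) :=
    { Adj := fun a b => G.Adj a b ∧ (d a).1 ≠ (d b).1
      symm := ⟨fun a b ⟨h1, h2⟩ => ⟨h1.symm, h2.symm⟩⟩
      loopless := ⟨fun a ⟨h1, _⟩ => G.loopless.irrefl a h1⟩ }
  have hRle : R ≤ G := fun a b h => h.1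
  -- not colourable contradiction helper
  have hHnotcol : ¬ H.Colorable (t - 1) := by
    intro hc
    have := SimpleGraph.chromaticNumber_le_iff_colorable.mpr hc
    rw [hχ] at this
    have : t ≤ t - 1 := by exact_mod_cast this
    omega
  rcases hram R hRle with ⟨f, hf⟩ | ⟨f, hf⟩
  · exact hHnotcol ⟨SimpleGraph.Coloring.mk (fun a => (d (f a)).1)
      (fun {a b} hab => (hf a b hab).2)⟩
  · refine hHnotcol ⟨SimpleGraph.Coloring.mk (fun a => (d (f a)).2) (fun {a b} hab => ?_)⟩
    obtain ⟨hG, hnR⟩ := hf a b hab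
    have h1 : (d (f a)).1 = (d (f b)).1 := by
      by_contra h1
      exact hnR ⟨hG, h1⟩
    intro h2
    exact hd hG (Prod.ext h1 h2)
end

section
/- For every prime p ≥ 3, in any edge-colouring of the grid graph Γ_{r+1, n} (vertex set [r+1]×[n], with (i,j) adjacent to (i',j') iff i=i' or j=j') with r colours, where n = r^{C(r+1,2)} + 1, there exists an alternating rectangle. In particular G(r) ≤ r^{C(r+1,2)} + 1. -/
/-- An edge-colouring `c` of the grid graph `Γ_{m,n}` contains an alternating rectangle:
a rectangle `(i,j,i',j')` with `i < i'`, `j < j'`, whose opposite sides receive the same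
colour. -/
def altRect {m n r : ℕ} (c : (Fin m × Fin n) → (Fin m × Fin n) → Fin r) : Prop :=
  ∃ i i' : Fin m, ∃ j j' : Fin n, i < i' ∧ j < j' ∧
    c (i, j) (i', j) = c (i, j') (i', j') ∧
    c (i, j) (i, j') = c (i', j) (i', j')

/-- `G(r)`: the least `n` such that every (symmetric) `r`-colouring of the edges of the
grid graph `Γ_{n,n}` contains an alternating rectangle. -/
noncomputable def gridRamsey (r : ℕ) : ℕ :=
  sInf {n | ∀ c : (Fin n × Fin n) → (Fin n × Fin n) → Fin r,
    (∀ a b, c a b = c b a) → altRect c}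

theorem key (r : ℕ) (hr : 1 ≤ r) (n : ℕ) (hn : n = r ^ Nat.choose (r + 1) 2 + 1)
    (c : (Fin (r + 1) × Fin n) → (Fin (r + 1) × Fin n) → Fin r)
    (hsymm : ∀ a b, c a b = c b a) : altRect c := by
  -- column colouring as a function on non-diagonal Sym2
  set col : Fin n → ({a : Sym2 (Fin (r+1)) // ¬ a.IsDiag} → Fin r) :=
    fun j s => Sym2.lift ⟨fun i i' => c (i, j) (i', j), fun i i' => hsymm _ _⟩ s.1 with hcol
  have hcard : Fintype.card ({a : Sym2 (Fin (r+1)) // ¬ a.IsDiag} → Fin r) < Fintype.card (Fin n) := by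
    rw [Fintype.card_fun, Sym2.card_subtype_not_diag, Fintype.card_fin, Fintype.card_fin, Fintype.card_fin, hn]
    exact Nat.lt_succ_self _
  obtain ⟨j, j', hjne, hjeq⟩ := Fintype.exists_ne_map_eq_of_card_lt col hcard
  -- WLOG j < j'
  wlog hjj : j < j' generalizing j j'
  · exact this j' j hjne.symm hjeq.symm (hjne.lt_or_gt.resolve_left hjj)
  -- pigeonhole on rows
  have hcard2 : Fintype.card (Fin r) < Fintype.card (Fin (r+1)) := by simp
  obtain ⟨i, i', hine, hieq⟩ :=
    Fintype.exists_ne_map_eq_of_card_lt (fun i : Fin (r+1) => c (i, j) (i, j')) hcard2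
  wlog hii : i < i' generalizing i i'
  · exact this i' i hine.symm hieq.symm (hine.lt_or_gt.resolve_left hii)
  refine ⟨i, i', j, j', hii, hjj, ?_, hieq⟩
  have hd : ¬ (s(i, i')).IsDiag := by simpa [Sym2.mk_isDiag_iff] using hine
  have := congrFun hjeq ⟨s(i, i'), hd⟩
  simpa [hcol] using this


theorem stmt15 (r : ℕ) (hr : 1 ≤ r) (n : ℕ) (hn : n = r ^ Nat.choose (r + 1) 2 + 1) :
    (∀ c : (Fin (r + 1) × Fin n) → (Fin (r + 1) × Fin n) → Fin r,
      (∀ a b, c a b = c b a) → altRect c) ∧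
    gridRamsey r ≤ r ^ Nat.choose (r + 1) 2 + 1 := by
  refine ⟨fun c hc => key r hr n hn c hc, ?_⟩
  have hle : r + 1 ≤ r ^ Nat.choose (r + 1) 2 + 1 := by
    have : r ≤ r ^ Nat.choose (r + 1) 2 :=
      Nat.le_self_pow (Nat.choose_pos (show 2 ≤ r + 1 by omega)).ne' r
    omega
  subst hn
  apply Nat.sInf_le
  intro c hsymm
  set c' : (Fin (r+1) × Fin (r ^ Nat.choose (r + 1) 2 + 1)) →
      (Fin (r+1) × Fin (r ^ Nat.choose (r + 1) 2 + 1)) → Fin r :=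
    fun a b => c (a.1.castLE hle, a.2) (b.1.castLE hle, b.2) with hc'
  obtain ⟨i, i', j, j', hii, hjj, h1, h2⟩ := key r hr _ rfl c' (fun a b => hsymm _ _)
  exact ⟨i.castLE hle, i'.castLE hle, j, j', by simp only [Fin.lt_def, Fin.coe_castLE]; exact hii, hjj, h1, h2⟩
end

section
/- For every integer p ≥ 3, any edge-colouring of K_n with fewer than n^{1/(p-2)} - 1 colours contains a copy of K_p receiving at most p - 1 distinct colours. Consequently f(n, p, p) ≥ n^{1/(p-2)} - 1. -/
lemma eg_swap {n k : ℕ} (c : Sym2 (Fin n) → Fin k) (U : Finset (Fin k))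
    {x y : Fin n} (h : c s(x, y) ∈ U) : c s(y, x) ∈ U := by
  rwa [show s(y, x) = s(x, y) from Sym2.eq_swap]

lemma eg_key (p : ℕ) (hp : 3 ≤ p) :
    ∀ (n k : ℕ) (c : Sym2 (Fin n) → Fin k) (A : Finset (Fin n)),
      (k + 1) ^ (p - 2) < A.card →
      ∃ S : Finset (Fin n), S ⊆ A ∧ S.card = p ∧
        ∃ T : Finset (Fin k), T.card ≤ p - 1 ∧
          ∀ i ∈ S, ∀ j ∈ S, i ≠ j → c s(i, j) ∈ T := by
  induction p, hp using Nat.le_induction with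
  | base =>
    intro n k c A hA
    rw [show (3 : ℕ) - 2 = 1 from rfl, pow_one] at hA
    rcases k with _ | k
    · obtain ⟨i, hi, j, hj, hij⟩ :=
        Finset.one_lt_card.mp (show 1 < A.card by omega)
      exact Fin.elim0 (c s(i, j))
    · obtain ⟨v, hv⟩ := Finset.card_pos.mp (show 0 < A.card by omega)
      have hcard : Fintype.card (Fin (k + 1)) < (A.erase v).card := by
        rw [Finset.card_erase_of_mem hv, Fintype.card_fin]; omega
      obtain ⟨a, ha, b, hb, hab, heq⟩ :=
        Finset.exists_ne_map_eq_of_card_lt_of_maps_to hcard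
          (f := fun w => c s(v, w)) (fun w _ => Finset.mem_univ _)
      have hav : a ≠ v := Finset.ne_of_mem_erase ha
      have hbv : b ≠ v := Finset.ne_of_mem_erase hb
      refine ⟨{v, a, b}, ?_, ?_, {c s(v, a), c s(a, b)}, ?_, ?_⟩
      · intro x hx
        simp only [Finset.mem_insert, Finset.mem_singleton] at hx
        rcases hx with rfl | rfl | rfl
        · exact hv
        · exact Finset.mem_of_mem_erase ha
        · exact Finset.mem_of_mem_erase hb
      · rw [Finset.card_insert_of_notMem (by simp [hav.symm, hbv.symm]),
          Finset.card_insert_of_notMem (by simp [hab])]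
        simp
      · exact Finset.card_insert_le _ _
      · intro i hi j hj hij
        have h1 : c s(v, a) ∈ ({c s(v, a), c s(a, b)} : Finset (Fin (k + 1))) :=
          Finset.mem_insert_self _ _
        have h2 : c s(a, b) ∈ ({c s(v, a), c s(a, b)} : Finset (Fin (k + 1))) :=
          Finset.mem_insert_of_mem (Finset.mem_singleton_self _)
        have h3 : c s(v, b) ∈ ({c s(v, a), c s(a, b)} : Finset (Fin (k + 1))) := by
          rw [← heq]; exact h1
        simp only [Finset.mem_insert, Finset.mem_singleton] at hi hj
        rcases hi with rfl | rfl | rfl <;> rcases hj with rfl | rfl | rfl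
        · exact absurd rfl hij
        · exact h1
        · exact h3
        · exact eg_swap c _ h1
        · exact absurd rfl hij
        · exact h2
        · exact eg_swap c _ h3
        · exact eg_swap c _ h2
        · exact absurd rfl hij
  | succ p hp ih =>
    intro n k c A hA
    have hp2 : p + 1 - 2 = (p - 2) + 1 := by omega
    rcases k with _ | k
    · have hA2 : 2 ≤ A.card := by
        have : 1 ≤ (0 + 1 : ℕ) ^ (p + 1 - 2) := Nat.one_le_pow _ _ (by omega)
        omega
      obtain ⟨i, hi, j, hj, hij⟩ :=
        Finset.one_lt_card.mp (show 1 < A.card by omega)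
      exact Fin.elim0 (c s(i, j))
    · obtain ⟨v, hv⟩ := Finset.card_pos.mp (lt_of_le_of_lt (Nat.zero_le _) hA)
      have hsum : ∑ t : Fin (k + 1),
          ((A.erase v).filter (fun w => c s(v, w) = t)).card = (A.erase v).card :=
        (Finset.card_eq_sum_card_fiberwise (fun w _ => Finset.mem_univ _)).symm
      have hbig : ∃ t : Fin (k + 1),
          (k + 2) ^ (p - 2) < ((A.erase v).filter (fun w => c s(v, w) = t)).card := by
        by_contra h
        push_neg at h
        have hle : (A.erase v).card ≤ (k + 1) * (k + 2) ^ (p - 2) := by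
          calc (A.erase v).card = _ := hsum.symm
            _ ≤ ∑ _t : Fin (k + 1), (k + 2) ^ (p - 2) :=
              Finset.sum_le_sum (fun t _ => h t)
            _ = (k + 1) * (k + 2) ^ (p - 2) := by
              simp [Finset.sum_const, mul_comm]
        have hx : 1 ≤ (k + 2) ^ (p - 2) := Nat.one_le_pow _ _ (by omega)
        have hcontra : A.card < A.card := by
          calc A.card = (A.erase v).card + 1 := (Finset.card_erase_add_one hv).symm
            _ ≤ (k + 1) * (k + 2) ^ (p - 2) + 1 := Nat.add_le_add_right hle 1
            _ ≤ (k + 1) * (k + 2) ^ (p - 2) + (k + 2) ^ (p - 2) :=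
              Nat.add_le_add_left hx _
            _ = (k + 2) * (k + 2) ^ (p - 2) := by ring
            _ = (k + 2) ^ (p + 1 - 2) := by rw [hp2, pow_succ]; ring
            _ < A.card := hA
        exact absurd hcontra (lt_irrefl _)
      obtain ⟨t, ht⟩ := hbig
      obtain ⟨S', hS'sub, hS'card, T', hT'card, hT'⟩ := ih n (k + 1) c _ ht
      have hvS' : v ∉ S' := fun h =>
        Finset.notMem_erase v A (Finset.mem_filter.mp (hS'sub h)).1
      refine ⟨insert v S', ?_, ?_, insert t T', ?_, ?_⟩
      · intro x hx
        rcases Finset.mem_insert.mp hx with rfl | hx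
        · exact hv
        · exact Finset.mem_of_mem_erase (Finset.mem_filter.mp (hS'sub hx)).1
      · rw [Finset.card_insert_of_notMem hvS', hS'card]
      · calc (insert t T').card ≤ T'.card + 1 := Finset.card_insert_le _ _
          _ ≤ (p - 1) + 1 := by omega
          _ = p + 1 - 1 := by omega
      · intro i hi j hj hij
        rcases Finset.mem_insert.mp hi with hiv | hi' <;>
          rcases Finset.mem_insert.mp hj with hjv | hj'
        · exact absurd (hiv.trans hjv.symm) hij
        · subst hiv
          have hcol := (Finset.mem_filter.mp (hS'sub hj')).2
          rw [hcol]; exact Finset.mem_insert_self _ _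
        · subst hjv
          have hcol := (Finset.mem_filter.mp (hS'sub hi')).2
          exact eg_swap c _ (by rw [hcol]; exact Finset.mem_insert_self _ _)
        · exact Finset.mem_insert_of_mem (hT' i hi' j hj' hij)



lemma eg_real_to_nat (n p k : ℕ) (hp : 3 ≤ p)
    (h : (k : ℝ) < (n : ℝ) ^ ((1 : ℝ) / ((p : ℝ) - 2)) - 1) :
    (k + 1) ^ (p - 2) < n := by
  have hxpos : (0 : ℝ) < (p : ℝ) - 2 := by
    have : (3 : ℝ) ≤ (p : ℝ) := by exact_mod_cast hp
    linarith
  have hx : ((p - 2 : ℕ) : ℝ) = (p : ℝ) - 2 := by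
    push_cast [Nat.cast_sub (show 2 ≤ p by omega)]
    ring
  have h1 : (k : ℝ) + 1 < (n : ℝ) ^ ((1 : ℝ) / ((p : ℝ) - 2)) := by linarith
  have h2 : ((k : ℝ) + 1) ^ (p - 2) <
      ((n : ℝ) ^ ((1 : ℝ) / ((p : ℝ) - 2))) ^ (p - 2) :=
    pow_lt_pow_left₀ h1 (by positivity) (by omega)
  have h3 : ((n : ℝ) ^ ((1 : ℝ) / ((p : ℝ) - 2))) ^ (p - 2) = (n : ℝ) := by
    rw [← Real.rpow_natCast ((n : ℝ) ^ ((1 : ℝ) / ((p : ℝ) - 2))) (p - 2),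
      ← Real.rpow_mul (Nat.cast_nonneg n), hx,
      one_div_mul_cancel (ne_of_gt hxpos), Real.rpow_one]
  rw [h3] at h2
  exact_mod_cast (by push_cast at h2 ⊢; linarith : (((k + 1) ^ (p - 2) : ℕ) : ℝ) < (n : ℝ))

lemma eg_nonempty (n p : ℕ) (hp : 3 ≤ p) :
    {k | ∃ c : Sym2 (Fin n) → Fin k,
      ∀ S : Finset (Fin n), S.card = p →
        p ≤ (((S ×ˢ S).filter (fun a => a.1 ≠ a.2)).image
          (fun a => c s(a.1, a.2))).card}.Nonempty := by
  classical
  refine ⟨Fintype.card (Sym2 (Fin n)),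
    fun s => Fintype.equivFin (Sym2 (Fin n)) s, ?_⟩
  set e := Fintype.equivFin (Sym2 (Fin n)) with he
  intro S hS
  obtain ⟨x, y, z, hx, hy, hz, hxy, hxz, hyz⟩ :=
    Finset.two_lt_card_iff.mp (show 2 < S.card by omega)
  rw [← hS]
  refine Finset.card_le_card_of_injOn
    (fun w => if w = x then e s(y, z) else e s(x, w)) ?_ ?_
  · intro a ha
    by_cases hax : a = x
    · simp only [if_pos hax]
      exact Finset.mem_image.mpr ⟨(y, z),
        Finset.mem_filter.mpr ⟨Finset.mem_product.mpr ⟨hy, hz⟩, hyz⟩, rfl⟩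
    · simp only [if_neg hax]
      exact Finset.mem_image.mpr ⟨(x, a),
        Finset.mem_filter.mpr ⟨Finset.mem_product.mpr ⟨hx, ha⟩,
          fun h => hax h.symm⟩, rfl⟩
  · intro a _ b _ hab
    simp only at hab
    by_cases hax : a = x <;> by_cases hbx : b = x
    · rw [hax, hbx]
    · rw [if_pos hax, if_neg hbx] at hab
      rcases Sym2.eq_iff.mp (e.injective hab) with ⟨h1, _⟩ | ⟨_, h2⟩
      · exact absurd h1.symm hxy
      · exact absurd h2.symm hxz
    · rw [if_neg hax, if_pos hbx] at hab
      rcases Sym2.eq_iff.mp (e.injective hab) with ⟨h1, _⟩ | ⟨h1, _⟩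
      · exact absurd h1 hxy
      · exact absurd h1 hxz
    · rw [if_neg hax, if_neg hbx] at hab
      rcases Sym2.eq_iff.mp (e.injective hab) with ⟨_, h2⟩ | ⟨hbx', h2⟩
      · exact h2
      · exact absurd h2 hax

/-- The Erdős–Gyárfás function `f(n,p,q)`: the minimum number of colours in an
edge-colouring of `K_n` in which every `K_p` receives at least `q` distinct colours. -/
noncomputable def egNumber (n p q : ℕ) : ℕ :=
  sInf {k | ∃ c : Sym2 (Fin n) → Fin k,
    ∀ S : Finset (Fin n), S.card = p →
      q ≤ (((S ×ˢ S).filter (fun a => a.1 ≠ a.2)).image (fun a => c s(a.1, a.2))).card}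

/-- Any edge-colouring of `K_n` with fewer than `n^{1/(p-2)} - 1` colours contains a
`K_p` receiving at most `p - 1` distinct colours; consequently
`f(n,p,p) ≥ n^{1/(p-2)} - 1`. -/
theorem stmt18 (n p : ℕ) (hp : 3 ≤ p) :
    (∀ k : ℕ, (k : ℝ) < (n : ℝ) ^ ((1 : ℝ) / ((p : ℝ) - 2)) - 1 →
      ∀ c : Sym2 (Fin n) → Fin k,
        ∃ S : Finset (Fin n), S.card = p ∧
          ∃ T : Finset (Fin k), T.card ≤ p - 1 ∧
            ∀ i ∈ S, ∀ j ∈ S, i ≠ j → c s(i, j) ∈ T) ∧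
    (n : ℝ) ^ ((1 : ℝ) / ((p : ℝ) - 2)) - 1 ≤ (egNumber n p p : ℝ) := by
  have part1 : ∀ k : ℕ, (k : ℝ) < (n : ℝ) ^ ((1 : ℝ) / ((p : ℝ) - 2)) - 1 →
      ∀ c : Sym2 (Fin n) → Fin k,
        ∃ S : Finset (Fin n), S.card = p ∧
          ∃ T : Finset (Fin k), T.card ≤ p - 1 ∧
            ∀ i ∈ S, ∀ j ∈ S, i ≠ j → c s(i, j) ∈ T := by
    intro k hk c
    have hkn : (k + 1) ^ (p - 2) < n := eg_real_to_nat n p k hp hk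
    obtain ⟨S, _, hScard, T, hTcard, hcov⟩ :=
      eg_key p hp n k c Finset.univ (by simpa using hkn)
    exact ⟨S, hScard, T, hTcard, hcov⟩
  refine ⟨part1, ?_⟩
  by_contra hlt
  push_neg at hlt
  have hne := eg_nonempty n p hp
  obtain ⟨c, hc⟩ : ∃ c : Sym2 (Fin n) → Fin (egNumber n p p),
      ∀ S : Finset (Fin n), S.card = p →
        p ≤ (((S ×ˢ S).filter (fun a => a.1 ≠ a.2)).image
          (fun a => c s(a.1, a.2))).card := Nat.sInf_mem hne
  obtain ⟨S, hScard, T, hTcard, hcov⟩ := part1 (egNumber n p p) hlt c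
  have hsub : ((S ×ˢ S).filter (fun a => a.1 ≠ a.2)).image
      (fun a => c s(a.1, a.2)) ⊆ T := by
    intro u hu
    obtain ⟨a, ha, rfl⟩ := Finset.mem_image.mp hu
    have h1 := Finset.mem_filter.mp ha
    have h2 := Finset.mem_product.mp h1.1
    exact hcov a.1 h2.1 a.2 h2.2 h1.2
  have hfin : p ≤ T.card := le_trans (hc S hScard) (Finset.card_le_card hsub)
  omega
end
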